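/- Let ρ : ℝ → ℝ be C¹ and convex, with derivative bounded: 0 ≤ ρ' ≤ γ for a constant γ > 0. Then for any A, B ∈ ℝ^{2×2}, (ρ'(det A) cof A − ρ'(det B) cof B)·(A − B) ≥ −γ |A − B|². -/

import Mathlib

/-- The cofactor matrix of a 2×2 real matrix. -/
def cof (A : Matrix (Fin 2) (Fin 2) ℝ) : Matrix (Fin 2) (Fin 2) ℝ :=
  !![A 1 1, -(A 1 0); -(A 0 1), A 0 0]

/-- The Frobenius inner product of two 2×2 real matrices. -/
def finner (M N : Matrix (Fin 2) (Fin 2) ℝ) : ℝ :=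
  ∑ i : Fin 2, ∑ j : Fin 2, M i j * N i j

/-- Key algebraic inequality for 2×2 entries. -/
lemma key_ineq (p q γ dA dB a00 a01 a10 a11 b00 b01 b10 b11 : ℝ)
    (hdA : dA = a00 * a11 - a01 * a10) (hdB : dB = b00 * b11 - b01 * b10)
    (hp0 : 0 ≤ p) (hpγ : p ≤ γ) (hq0 : 0 ≤ q) (hqγ : q ≤ γ)
    (hmm : 0 ≤ (p - q) * (dA - dB)) :
    -γ * ((a00 - b00) ^ 2 + (a01 - b01) ^ 2 + (a10 - b10) ^ 2 + (a11 - b11) ^ 2) ≤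
      (p * a11 - q * b11) * (a00 - b00) + (q * b10 - p * a10) * (a01 - b01) +
        (q * b01 - p * a01) * (a10 - b10) + (p * a00 - q * b00) * (a11 - b11) := by
  set n00 := a00 - b00
  set n01 := a01 - b01
  set n10 := a10 - b10
  set n11 := a11 - b11
  have h2 : 0 ≤ (p + q) * ((n00 * n11 - n01 * n10) +
      (n00 ^ 2 + n01 ^ 2 + n10 ^ 2 + n11 ^ 2) / 2) := by
    apply mul_nonneg (by linarith)
    simp only [n00, n01, n10, n11]
    nlinarith [sq_nonneg (a00 - b00 + (a11 - b11)), sq_nonneg (a01 - b01 - (a10 - b10))]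
  have h3 : 0 ≤ (2 * γ - p - q) * ((n00 ^ 2 + n01 ^ 2 + n10 ^ 2 + n11 ^ 2) / 2) := by
    apply mul_nonneg (by linarith)
    positivity
  simp only [n00, n01, n10, n11] at h2 h3 ⊢
  nlinarith [hmm, h2, h3]

/-- (ρ'(det A) cof A − ρ'(det B) cof B)·(A − B) ≥ −γ|A − B|². -/
theorem nonlinear_term_lower_bound (ρ : ℝ → ℝ) (γ : ℝ) (hγ : 0 < γ)
    (hρ : ContDiff ℝ 1 ρ) (hconv : ConvexOn ℝ Set.univ ρ)
    (hbound : ∀ s : ℝ, 0 ≤ deriv ρ s ∧ deriv ρ s ≤ γ)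
    (A B : Matrix (Fin 2) (Fin 2) ℝ) :
    -γ * ∑ i : Fin 2, ∑ j : Fin 2, (A i j - B i j) ^ 2 ≤
      finner (deriv ρ A.det • cof A - deriv ρ B.det • cof B) (A - B) := by
  have hmonoOn : MonotoneOn (deriv ρ) Set.univ :=
    hconv.monotoneOn_deriv fun x _ => (hρ.differentiable one_ne_zero).differentiableAt
  have hmono : Monotone (deriv ρ) := fun x y h =>
    hmonoOn (Set.mem_univ x) (Set.mem_univ y) h
  have hp0 := (hbound A.det).1
  have hpγ := (hbound A.det).2
  have hq0 := (hbound B.det).1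
  have hqγ := (hbound B.det).2
  have hmm : 0 ≤ (deriv ρ A.det - deriv ρ B.det) * (A.det - B.det) := by
    rcases le_total A.det B.det with h | h
    · have := hmono h
      nlinarith
    · have := hmono h
      nlinarith
  have hdetA : A.det = A 0 0 * A 1 1 - A 0 1 * A 1 0 := Matrix.det_fin_two A
  have hdetB : B.det = B 0 0 * B 1 1 - B 0 1 * B 1 0 := Matrix.det_fin_two B
  have := key_ineq (deriv ρ A.det) (deriv ρ B.det) γ A.det B.det
    (A 0 0) (A 0 1) (A 1 0) (A 1 1) (B 0 0) (B 0 1) (B 1 0) (B 1 1)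
    hdetA hdetB hp0 hpγ hq0 hqγ hmm
  simp only [finner, cof, Fin.sum_univ_two, Matrix.sub_apply, Matrix.smul_apply,
    Matrix.of_apply, Matrix.cons_val', Matrix.cons_val_zero, Matrix.cons_val_one,
    Matrix.head_cons, Matrix.head_fin_const, Matrix.empty_val',
    Matrix.cons_val_fin_one, smul_eq_mul]
  nlinarith [this]
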